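/- Let Z be a real Banach space and (T_t)_{t≥0} a strongly continuous semigroup of bounded linear operators on Z. Let D(B) be the set of all z ∈ Z for which the map t ↦ T_t z is right-differentiable at t = 0, and for z ∈ D(B) set B z := −(d/dt)|_{t=0⁺} T_t z (so that formally T_t = e^{−Bt}). Let U be open in Z, let Y be a real normed space, and let V : U → Y be continuous at each point of U and Fréchet differentiable at each point of U ∩ D(B). Let W : U × Z → Y be continuous and such that DV(z)(−B z + w) = W(z, w) for all z ∈ U ∩ D(B) and w ∈ Z. Let τ > 0, I := [0, τ], z̄ ∈ U, let g : I → Z be continuous and let z : I → U satisfy z(t) = T_t z̄ + ∫₀ᵗ T_{t−s} g(s) ds (Bochner integral in Z) for all t ∈ I. Then the map V ∘ z : I → Y is differentiable on I (one-sidedly at the endpoints) and (V ∘ z)'(t) = W(z(t), g(t)) for every t ∈ I. -/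

import Mathlib

open MeasureTheory intervalIntegral

open Set Filter

section Aux
variable {Z : Type*} [NormedAddCommGroup Z] [NormedSpace ℝ Z] [CompleteSpace Z]
  (T : ℝ → Z →L[ℝ] Z)

theorem aux_Tmax_cont
    (hTcont : ∀ z : Z, ContinuousOn (fun t => T t z) (Set.Ici (0 : ℝ)))
    (x : Z) : Continuous fun t : ℝ => T (max t 0) x :=
  (hTcont x).comp_continuous (continuous_id.max continuous_const) (fun _ => Set.mem_Ici.2 (le_max_right _ _))

theorem aux_joint {Z : Type*} [NormedAddCommGroup Z] [NormedSpace ℝ Z] [CompleteSpace Z]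
    (T : ℝ → Z →L[ℝ] Z)
    (hTcont : ∀ z : Z, ContinuousOn (fun t => T t z) (Set.Ici (0 : ℝ))) :
    Continuous fun p : ℝ × Z => T (max p.1 0) p.2 := by
  rw [continuous_iff_continuousAt]
  rintro ⟨t₀, x₀⟩
  obtain ⟨M, hM⟩ : ∃ M, ∀ i : Icc (t₀ - 1) (t₀ + 1), ‖T (max (i : ℝ) 0)‖ ≤ M := by
    apply banach_steinhaus
    intro x
    obtain ⟨C, hC⟩ := isCompact_Icc.exists_bound_of_continuousOn
      ((aux_Tmax_cont T hTcont x).continuousOn (s := Icc (t₀ - 1) (t₀ + 1)))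
    exact ⟨C, fun i => hC i i.2⟩
  have hM0 : (0:ℝ) ≤ max M 0 := le_max_right _ _
  rw [Metric.continuousAt_iff]
  intro ε hε
  have hc : ContinuousAt (fun t : ℝ => T (max t 0) x₀) t₀ := (aux_Tmax_cont T hTcont x₀).continuousAt
  rw [Metric.continuousAt_iff] at hc
  obtain ⟨δ₁, hδ₁, hδ₁'⟩ := hc (ε / 2) (by positivity)
  refine ⟨min δ₁ (min 1 (ε / (2 * (max M 0 + 1)))), by positivity, ?_⟩
  rintro ⟨t, x⟩ hp
  have h1 : dist t t₀ < min δ₁ (min 1 (ε / (2 * (max M 0 + 1)))) :=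
    lt_of_le_of_lt (by rw [Prod.dist_eq]; exact le_max_left _ _) hp
  have h2 : dist x x₀ < ε / (2 * (max M 0 + 1)) :=
    lt_of_le_of_lt (by rw [Prod.dist_eq]; exact le_max_right _ _)
      (lt_of_lt_of_le hp (le_trans (min_le_right _ _) (min_le_right _ _)))
  have ht : t ∈ Icc (t₀ - 1) (t₀ + 1) := by
    have : |t - t₀| ≤ 1 :=
      le_of_lt (lt_of_lt_of_le h1 (le_trans (min_le_right _ _) (min_le_left _ _)))
    constructor <;> [linarith [abs_le.1 this |>.1]; linarith [abs_le.1 this |>.2]]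
  have key : dist (T (max t 0) x) (T (max t₀ 0) x₀)
      ≤ dist (T (max t 0) x) (T (max t 0) x₀) + dist (T (max t 0) x₀) (T (max t₀ 0) x₀) :=
    dist_triangle _ _ _
  have b1 : dist (T (max t 0) x) (T (max t 0) x₀) ≤ (max M 0 + 1) * dist x x₀ := by
    rw [dist_eq_norm, ← map_sub]
    calc ‖T (max t 0) (x - x₀)‖ ≤ ‖T (max t 0)‖ * ‖x - x₀‖ := (T _).le_opNorm _
      _ ≤ (max M 0 + 1) * ‖x - x₀‖ := by
          apply mul_le_mul_of_nonneg_right _ (norm_nonneg _)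
          exact le_trans (hM ⟨t, ht⟩) (by nlinarith [le_max_left M 0])
      _ = (max M 0 + 1) * dist x x₀ := by rw [dist_eq_norm]
  have b2 : dist (T (max t 0) x₀) (T (max t₀ 0) x₀) < ε / 2 :=
    hδ₁' (lt_of_lt_of_le h1 (min_le_left _ _))
  have b3 : (max M 0 + 1) * dist x x₀ ≤ ε / 2 := by
    rw [div_mul_eq_div_div] at h2
    calc (max M 0 + 1) * dist x x₀ ≤ (max M 0 + 1) * (ε / 2 / (max M 0 + 1)) := by
          apply mul_le_mul_of_nonneg_left (le_of_lt h2) (by positivity)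
      _ = ε / 2 := by
          have h : (max M 0 + 1) ≠ 0 := by positivity
          field_simp
  calc dist (T (max t 0) x) (T (max t₀ 0) x₀) ≤ _ + _ := key
    _ < ε / 2 + ε / 2 := by apply add_lt_add_of_le_of_lt (le_trans b1 b3) b2
    _ = ε := by ring


theorem aux_cont3
    (hTcont : ∀ z : Z, ContinuousOn (fun t => T t z) (Set.Ici (0 : ℝ)))
    {A : Type*} [TopologicalSpace A] {u : A → ℝ} {v : A → Z}
    (hu : Continuous u) (hv : Continuous v) :
    Continuous fun a => T (max (u a) 0) (v a) :=
  (aux_joint T hTcont).comp (hu.prodMk hv)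

theorem aux_bound
    (hTcont : ∀ z : Z, ContinuousOn (fun t => T t z) (Set.Ici (0 : ℝ)))
    (a b : ℝ) :
    ∃ M : ℝ, 0 ≤ M ∧ ∀ σ ∈ Set.Icc a b, ‖T (max σ 0)‖ ≤ M := by
  obtain ⟨M, hM⟩ : ∃ M, ∀ i : Set.Icc a b, ‖T (max (i : ℝ) 0)‖ ≤ M := by
    apply banach_steinhaus
    intro x
    obtain ⟨C, hC⟩ := isCompact_Icc.exists_bound_of_continuousOn
      ((aux_Tmax_cont T hTcont x).continuousOn (s := Set.Icc a b))
    exact ⟨C, fun i => hC i i.2⟩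
  exact ⟨max M 0, le_max_right _ _, fun σ hσ => le_trans (hM ⟨σ, hσ⟩) (le_max_left _ _)⟩

/-- The averaged operator `y ↦ h⁻¹ • ∫_0^h T σ y dσ`. -/
noncomputable def avgOp (h M : ℝ) (hh : 0 < h)
    (hM : ∀ σ ∈ Set.Icc (0:ℝ) h, ‖T (max σ 0)‖ ≤ M)
    (hTcont : ∀ z : Z, ContinuousOn (fun t => T t z) (Set.Ici (0 : ℝ))) : Z →L[ℝ] Z :=
  LinearMap.mkContinuous
    { toFun := fun y => h⁻¹ • ∫ σ in (0:ℝ)..h, T (max σ 0) y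
      map_add' := fun y₁ y₂ => by
        have i1 := (aux_Tmax_cont T hTcont y₁).intervalIntegrable (μ := volume) (a := 0) (b := h)
        have i2 := (aux_Tmax_cont T hTcont y₂).intervalIntegrable (μ := volume) (a := 0) (b := h)
        simp only [map_add]
        rw [intervalIntegral.integral_add i1 i2, smul_add]
      map_smul' := fun cc y => by
        simp only [ContinuousLinearMap.map_smul, RingHom.id_apply]
        rw [intervalIntegral.integral_smul, smul_comm] }
    M
    (fun y => by
      have hb : ‖∫ σ in (0:ℝ)..h, T (max σ 0) y‖ ≤ M * ‖y‖ * |h - 0| := by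
        apply intervalIntegral.norm_integral_le_of_norm_le_const
        intro σ hσ
        rw [Set.uIoc_of_le hh.le] at hσ
        calc ‖T (max σ 0) y‖ ≤ ‖T (max σ 0)‖ * ‖y‖ := (T _).le_opNorm _
          _ ≤ M * ‖y‖ := by
              apply mul_le_mul_of_nonneg_right _ (norm_nonneg _)
              exact hM σ ⟨hσ.1.le, hσ.2⟩
      simp only [LinearMap.coe_mk, AddHom.coe_mk]
      rw [norm_smul, Real.norm_eq_abs, abs_inv, abs_of_pos hh]
      rw [sub_zero, abs_of_pos hh] at hb
      calc h⁻¹ * ‖∫ σ in (0:ℝ)..h, T (max σ 0) y‖ ≤ h⁻¹ * (M * ‖y‖ * h) := by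
            apply mul_le_mul_of_nonneg_left hb (by positivity)
        _ = M * ‖y‖ := by field_simp)

theorem avgOp_apply (h M : ℝ) (hh : 0 < h)
    (hM : ∀ σ ∈ Set.Icc (0:ℝ) h, ‖T (max σ 0)‖ ≤ M)
    (hTcont : ∀ z : Z, ContinuousOn (fun t => T t z) (Set.Ici (0 : ℝ))) (y : Z) :
    avgOp T h M hh hM hTcont y = h⁻¹ • ∫ σ in (0:ℝ)..h, T (max σ 0) y := rfl

theorem avgOp_comm (h M : ℝ) (hh : 0 < h)
    (hM : ∀ σ ∈ Set.Icc (0:ℝ) h, ‖T (max σ 0)‖ ≤ M)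
    (hTadd : ∀ s t : ℝ, 0 ≤ s → 0 ≤ t → T (s + t) = (T s).comp (T t))
    (hTcont : ∀ z : Z, ContinuousOn (fun t => T t z) (Set.Ici (0 : ℝ)))
    {ε : ℝ} (hε : 0 ≤ ε) (y : Z) :
    avgOp T h M hh hM hTcont (T ε y) = T ε (avgOp T h M hh hM hTcont y) := by
  rw [avgOp_apply, avgOp_apply, ContinuousLinearMap.map_smul]
  congr 1
  rw [← (T ε).intervalIntegral_comp_comm
    ((aux_Tmax_cont T hTcont y).intervalIntegrable (μ := volume) (a := 0) (b := h))]
  apply intervalIntegral.integral_congr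
  intro σ hσ
  rw [Set.uIcc_of_le hh.le] at hσ
  have h0σ : (0:ℝ) ≤ σ := hσ.1
  simp only
  rw [max_eq_left h0σ]
  have e1 : T σ (T ε y) = T (σ + ε) y := by rw [hTadd σ ε h0σ hε]; rfl
  have e2 : T ε (T σ y) = T (ε + σ) y := by rw [hTadd ε σ hε h0σ]; rfl
  rw [e1, e2, add_comm]

theorem aux_memDB
    (hT0 : T 0 = ContinuousLinearMap.id ℝ Z)
    (hTadd : ∀ s t : ℝ, 0 ≤ s → 0 ≤ t → T (s + t) = (T s).comp (T t))
    (hTcont : ∀ z : Z, ContinuousOn (fun t => T t z) (Set.Ici (0 : ℝ)))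
    (DB : Set Z)
    (hDB : ∀ z : Z, z ∈ DB ↔ ∃ d : Z, HasDerivWithinAt (fun t => T t z) d (Set.Ici (0 : ℝ)) 0)
    (x : Z) (h : ℝ) (hh : 0 < h) :
    (h⁻¹ • ∫ σ in (0:ℝ)..h, T (max σ 0) x) ∈ DB := by
  have cont : Continuous fun σ : ℝ => T (max σ 0) x := aux_Tmax_cont T hTcont x
  set F : ℝ → Z := fun v => ∫ σ in (0:ℝ)..v, T (max σ 0) x with hF
  have hFd : ∀ v : ℝ, HasDerivAt F (T (max v 0) x) v := fun v =>
    (cont.integral_hasStrictDerivAt 0 v).hasDerivAt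
  have key : ∀ u : ℝ, 0 ≤ u → T u (∫ σ in (0:ℝ)..h, T (max σ 0) x) = F (u + h) - F u := by
    intro u hu
    rw [← (T u).intervalIntegral_comp_comm
      (cont.intervalIntegrable (μ := volume) (a := 0) (b := h))]
    have e1 : (∫ σ in (0:ℝ)..h, T u (T (max σ 0) x)) = ∫ σ in (0:ℝ)..h, T (max (u + σ) 0) x := by
      apply intervalIntegral.integral_congr
      intro σ hσ
      rw [Set.uIcc_of_le hh.le] at hσ
      simp only
      rw [max_eq_left hσ.1, max_eq_left (by linarith [hσ.1] : (0:ℝ) ≤ u + σ),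
        hTadd u σ hu hσ.1]
      rfl
    rw [e1]
    have e2 : (∫ σ in (0:ℝ)..h, T (max (u + σ) 0) x) = ∫ σ in (u + 0)..(u + h), T (max σ 0) x :=
      intervalIntegral.integral_comp_add_left (a := 0) (b := h) (fun σ => T (max σ 0) x) u
    rw [e2, add_zero]
    rw [← intervalIntegral.integral_interval_sub_left
      (cont.intervalIntegrable (μ := volume) (a := 0) (b := u + h))
      (cont.intervalIntegrable (μ := volume) (a := 0) (b := u))]
  have hd1 : HasDerivAt (fun u : ℝ => F (u + h)) (T (max (0 + h) 0) x) 0 := by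
    have := (hFd (0 + h)).scomp (x := (0:ℝ)) ((hasDerivAt_id (0:ℝ)).add_const h)
    simpa [Function.comp_def] using this
  have hd : HasDerivAt (fun u : ℝ => F (u + h) - F u) (T (max (0 + h) 0) x - T (max (0:ℝ) 0) x) 0 :=
    hd1.sub (hFd 0)
  rw [hDB]
  refine ⟨h⁻¹ • (T (max (0 + h) 0) x - T (max (0:ℝ) 0) x), ?_⟩
  apply HasDerivWithinAt.congr ((hd.hasDerivWithinAt (s := Set.Ici (0:ℝ))).const_smul h⁻¹)
  · intro u hu
    rw [ContinuousLinearMap.map_smul, key u hu]; rfl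
  · rw [ContinuousLinearMap.map_smul, key 0 le_rfl]; rfl


theorem aux_avg_close
    (hTcont : ∀ z : Z, ContinuousOn (fun t => T t z) (Set.Ici (0 : ℝ)))
    (y : Z) (h : ℝ) (hh : 0 < h) (C : ℝ)
    (hC : ∀ σ ∈ Set.Icc (0:ℝ) h, ‖T (max σ 0) y - y‖ ≤ C) :
    ‖(h⁻¹ • ∫ σ in (0:ℝ)..h, T (max σ 0) y) - y‖ ≤ C := by
  have i1 := (aux_Tmax_cont T hTcont y).intervalIntegrable (μ := volume) (a := 0) (b := h)
  have e : (h⁻¹ • ∫ σ in (0:ℝ)..h, T (max σ 0) y) - y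
      = h⁻¹ • ∫ σ in (0:ℝ)..h, (T (max σ 0) y - y) := by
    rw [intervalIntegral.integral_sub i1 intervalIntegrable_const,
      intervalIntegral.integral_const, sub_zero, smul_sub, smul_smul,
      inv_mul_cancel₀ hh.ne', one_smul]
  rw [e, norm_smul, Real.norm_eq_abs, abs_inv, abs_of_pos hh]
  have hb : ‖∫ σ in (0:ℝ)..h, (T (max σ 0) y - y)‖ ≤ C * |h - 0| := by
    apply intervalIntegral.norm_integral_le_of_norm_le_const
    intro σ hσ
    rw [Set.uIoc_of_le hh.le] at hσ
    exact hC σ ⟨hσ.1.le, hσ.2⟩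
  rw [sub_zero, abs_of_pos hh] at hb
  calc h⁻¹ * ‖∫ σ in (0:ℝ)..h, (T (max σ 0) y - y)‖ ≤ h⁻¹ * (C * h) := by
        apply mul_le_mul_of_nonneg_left hb (by positivity)
    _ = C := by field_simp

theorem aux_avg_tendsto
    (hT0 : T 0 = ContinuousLinearMap.id ℝ Z)
    (hTcont : ∀ z : Z, ContinuousOn (fun t => T t z) (Set.Ici (0 : ℝ)))
    (y : Z) :
    Tendsto (fun h : ℝ => h⁻¹ • ∫ σ in (0:ℝ)..h, T (max σ 0) y)
      (nhdsWithin 0 (Set.Ioi 0)) (nhds y) := by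
  rw [Metric.tendsto_nhdsWithin_nhds]
  intro ε hε
  have hc : ContinuousAt (fun σ : ℝ => T (max σ 0) y) 0 :=
    (aux_Tmax_cont T hTcont y).continuousAt
  rw [Metric.continuousAt_iff] at hc
  obtain ⟨δ, hδ, hδ'⟩ := hc (ε / 2) (by positivity)
  refine ⟨δ, hδ, fun h hhmem hd => ?_⟩
  have hh : (0:ℝ) < h := hhmem
  rw [Real.dist_eq, sub_zero, abs_of_pos hh] at hd
  rw [dist_eq_norm]
  have hb : ∀ σ ∈ Set.Icc (0:ℝ) h, ‖T (max σ 0) y - y‖ ≤ ε / 2 := by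
    intro σ hσ
    have hσδ : dist σ 0 < δ := by
      rw [Real.dist_eq, sub_zero, abs_of_nonneg hσ.1]
      exact lt_of_le_of_lt hσ.2 hd
    have := hδ' hσδ
    rw [dist_eq_norm] at this
    simp only [max_self, hT0, ContinuousLinearMap.coe_id', id_eq] at this
    exact le_of_lt this
  exact lt_of_le_of_lt (aux_avg_close T hTcont y h hh _ hb) (by linarith)

theorem aux_G_deriv
    (hT0 : T 0 = ContinuousLinearMap.id ℝ Z)
    (hTcont : ∀ z : Z, ContinuousOn (fun t => T t z) (Set.Ici (0 : ℝ)))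
    (gt : ℝ → Z) (hgt : Continuous gt) (s : ℝ) :
    HasDerivWithinAt (fun b => ∫ r in s..b, T (max (b - r) 0) (gt r)) (gt s)
      (Set.Ici s) s := by
  rw [hasDerivWithinAt_iff_isLittleO, Asymptotics.isLittleO_iff]
  intro c hc
  have hq : ContinuousAt (fun p : ℝ × ℝ => T (max p.1 0) (gt p.2)) (0, s) :=
    (aux_cont3 T hTcont continuous_fst (hgt.comp continuous_snd)).continuousAt
  rw [Metric.continuousAt_iff] at hq
  obtain ⟨δ, hδ, hδ'⟩ := hq c hc
  rw [eventually_nhdsWithin_iff, Metric.eventually_nhds_iff]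
  refine ⟨δ, hδ, fun b hb hbs => ?_⟩
  have hsb : s ≤ b := hbs
  rw [Real.dist_eq] at hb
  have habs : |b - s| = b - s := abs_of_nonneg (by linarith)
  have int1 : IntervalIntegrable (fun r => T (max (b - r) 0) (gt r)) volume s b :=
    (aux_cont3 T hTcont (continuous_const.sub continuous_id) hgt).intervalIntegrable _ _
  have e : (∫ r in s..b, T (max (b - r) 0) (gt r)) - (∫ r in s..s, T (max (s - r) 0) (gt r))
      - (b - s) • gt s = ∫ r in s..b, (T (max (b - r) 0) (gt r) - gt s) := by
    rw [intervalIntegral.integral_same, intervalIntegral.integral_sub int1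
      intervalIntegrable_const, intervalIntegral.integral_const, sub_zero]
  rw [e]
  have hbd : ‖∫ r in s..b, (T (max (b - r) 0) (gt r) - gt s)‖ ≤ c * |b - s| := by
    apply intervalIntegral.norm_integral_le_of_norm_le_const
    intro r hr
    rw [Set.uIoc_of_le hsb] at hr
    have hdp : dist ((b - r, r) : ℝ × ℝ) (0, s) < δ := by
      rw [Prod.dist_eq, max_lt_iff]
      constructor
      · show dist (b - r) 0 < δ
        rw [Real.dist_eq, sub_zero, abs_of_nonneg (by linarith [hr.2] : (0:ℝ) ≤ b - r)]
        apply lt_of_le_of_lt _ (lt_of_le_of_lt (le_abs_self _) hb)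
        linarith [hr.1]
      · show dist r s < δ
        rw [Real.dist_eq, abs_of_nonneg (by linarith [hr.1] : (0:ℝ) ≤ r - s)]
        apply lt_of_le_of_lt _ (lt_of_le_of_lt (le_abs_self _) hb)
        linarith [hr.2]
    have := hδ' hdp
    rw [dist_eq_norm] at this
    simp only [max_self, hT0] at this
    exact le_of_lt (by simpa using this)
  calc ‖∫ r in s..b, (T (max (b - r) 0) (gt r) - gt s)‖ ≤ c * |b - s| := hbd
    _ = c * ‖b - s‖ := by rw [Real.norm_eq_abs]

theorem aux_caus
    (hTadd : ∀ s t : ℝ, 0 ≤ s → 0 ≤ t → T (s + t) = (T s).comp (T t))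
    (hTcont : ∀ z : Z, ContinuousOn (fun t => T t z) (Set.Ici (0 : ℝ)))
    (τ : ℝ) (zbar : Z) (g : ℝ → Z) (gt : ℝ → Z) (hgt : Continuous gt)
    (hgg : ∀ r ∈ Set.Icc (0:ℝ) τ, gt r = g r)
    (z : ℝ → Z)
    (hz : ∀ t ∈ Set.Icc (0:ℝ) τ, z t = T t zbar + ∫ s in (0 : ℝ)..t, (T (t - s)) (g s)) :
    ∀ a b : ℝ, 0 ≤ a → a ≤ b → b ≤ τ →
      z b = T (b - a) (z a) + ∫ r in a..b, T (max (b - r) 0) (gt r) := by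
  have int_all : ∀ c : ℝ, Continuous fun r => T (max (c - r) 0) (gt r) := fun c =>
    aux_cont3 T hTcont (continuous_const.sub continuous_id) hgt
  have hzb' : ∀ t ∈ Set.Icc (0:ℝ) τ, z t
      = T (max t 0) zbar + ∫ s in (0:ℝ)..t, T (max (t - s) 0) (gt s) := by
    intro t ht
    rw [hz t ht, max_eq_left ht.1]
    congr 1
    apply intervalIntegral.integral_congr
    intro s hs
    rw [Set.uIcc_of_le ht.1] at hs
    simp only
    rw [max_eq_left (by linarith [hs.2] : (0:ℝ) ≤ t - s),
      hgg s ⟨hs.1, le_trans hs.2 ht.2⟩]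
  intro a b ha hab hbτ
  have haτ : a ≤ τ := le_trans hab hbτ
  have hb0 : 0 ≤ b := le_trans ha hab
  rw [hzb' b ⟨hb0, hbτ⟩]
  have split : (∫ s in (0:ℝ)..b, T (max (b - s) 0) (gt s))
      = (∫ s in (0:ℝ)..a, T (max (b - s) 0) (gt s))
        + ∫ s in a..b, T (max (b - s) 0) (gt s) :=
    (intervalIntegral.integral_add_adjacent_intervals
      ((int_all b).intervalIntegrable _ _) ((int_all b).intervalIntegrable _ _)).symm
  have e1 : (∫ s in (0:ℝ)..a, T (max (b - s) 0) (gt s))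
      = ∫ s in (0:ℝ)..a, T (b - a) (T (max (a - s) 0) (gt s)) := by
    apply intervalIntegral.integral_congr
    intro s hs
    rw [Set.uIcc_of_le ha] at hs
    simp only
    rw [max_eq_left (by linarith [hs.2] : (0:ℝ) ≤ a - s),
      max_eq_left (by linarith [hs.2] : (0:ℝ) ≤ b - s)]
    have : b - s = (b - a) + (a - s) := by ring
    rw [this, hTadd (b - a) (a - s) (by linarith) (by linarith [hs.2])]
    rfl
  have e2 : (∫ s in (0:ℝ)..a, T (b - a) (T (max (a - s) 0) (gt s)))
      = T (b - a) (∫ s in (0:ℝ)..a, T (max (a - s) 0) (gt s)) :=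
    (T (b - a)).intervalIntegral_comp_comm ((int_all a).intervalIntegrable _ _)
  have e3 : T (max b 0) zbar = T (b - a) (T (max a 0) zbar) := by
    rw [max_eq_left hb0, max_eq_left ha]
    have h4 := hTadd (b - a) a (by linarith) ha
    rw [sub_add_cancel] at h4
    rw [h4]
    rfl
  rw [split, e1, e2, e3, hzb' a ⟨ha, haτ⟩, ContinuousLinearMap.map_add, add_assoc]

end Aux

/-- Differentiation of functionals along mild solutions of abstract
evolution equations. `(T t)_{t ≥ 0}` is a strongly continuous semigroup on a real Banach
space `Z` (formally `T t = e^{-Bt}`), `DB` is the generator domain and `Bop` the operator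
`B`, characterized by right differentiability at `0`. If `V : U → Y` is continuous on the
open set `U`, Fréchet differentiable (with derivative `DV`) at points of `U ∩ DB`,
`W : U × Z → Y` is continuous and `DV z (-Bop z + w) = W z w` on `(U ∩ DB) × Z`, and
`z(t) = T t zbar + ∫₀ᵗ T (t-s) (g s) ds` on `I = [0, τ]` with `g` continuous and `z(I) ⊆ U`,
then `V ∘ z` is differentiable on `I` with `(V ∘ z)'(t) = W (z t) (g t)`. -/
theorem stmt3 {Z Y : Type*}
    [NormedAddCommGroup Z] [NormedSpace ℝ Z] [CompleteSpace Z]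
    [NormedAddCommGroup Y] [NormedSpace ℝ Y]
    (T : ℝ → Z →L[ℝ] Z)
    (hT0 : T 0 = ContinuousLinearMap.id ℝ Z)
    (hTadd : ∀ s t : ℝ, 0 ≤ s → 0 ≤ t → T (s + t) = (T s).comp (T t))
    (hTcont : ∀ z : Z, ContinuousOn (fun t => T t z) (Set.Ici (0 : ℝ)))
    (DB : Set Z) (Bop : Z → Z)
    (hDB : ∀ z : Z, z ∈ DB ↔ ∃ d : Z, HasDerivWithinAt (fun t => T t z) d (Set.Ici (0 : ℝ)) 0)
    (hBop : ∀ z ∈ DB, HasDerivWithinAt (fun t => T t z) (-(Bop z)) (Set.Ici (0 : ℝ)) 0)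
    (U : Set Z) (hU : IsOpen U)
    (V : Z → Y) (hVcont : ∀ z ∈ U, ContinuousAt V z)
    (DV : Z → Z →L[ℝ] Y) (hDV : ∀ z ∈ U ∩ DB, HasFDerivAt V (DV z) z)
    (W : Z → Z → Y)
    (hWcont : ContinuousOn (fun p : Z × Z => W p.1 p.2) (U ×ˢ (Set.univ : Set Z)))
    (hVW : ∀ z ∈ U ∩ DB, ∀ w : Z, DV z (-(Bop z) + w) = W z w)
    (τ : ℝ) (hτ : 0 < τ) (zbar : Z) (hzbar : zbar ∈ U)
    (g : ℝ → Z) (hg : ContinuousOn g (Set.Icc 0 τ))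
    (z : ℝ → Z) (hzU : ∀ t ∈ Set.Icc 0 τ, z t ∈ U)
    (hz : ∀ t ∈ Set.Icc 0 τ, z t = T t zbar + ∫ s in (0 : ℝ)..t, (T (t - s)) (g s)) :
    ∀ t ∈ Set.Icc 0 τ,
      HasDerivWithinAt (fun s => V (z s)) (W (z t) (g t)) (Set.Icc 0 τ) t := by
  intro t₀ ht₀
  -- continuous extension of g
  set gt : ℝ → Z := fun r => g (Set.projIcc 0 τ hτ.le r) with hgtdef
  have hgtc : Continuous gt :=
    hg.comp_continuous (continuous_subtype_val.comp continuous_projIcc)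
      (fun r => (Set.projIcc 0 τ hτ.le r).2)
  have hgg : ∀ r ∈ Set.Icc (0:ℝ) τ, gt r = g r := by
    intro r hr
    rw [hgtdef]
    simp only [Set.projIcc_of_mem hτ.le hr]
  -- continuity of z on [0, τ]
  have hzc : ContinuousOn z (Set.Icc 0 τ) := by
    have hbig : Continuous fun t : ℝ =>
        T (max t 0) zbar + ∫ s in (0:ℝ)..t, T (max (t - s) 0) (gt s) := by
      apply (aux_Tmax_cont T hTcont zbar).add
      exact intervalIntegral.continuous_parametric_intervalIntegral_of_continuous (μ := volume)
        (a₀ := 0) (f := fun t s => T (max (t - s) 0) (gt s))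
        (aux_cont3 T hTcont (continuous_fst.sub continuous_snd) (hgtc.comp continuous_snd))
        continuous_id
    apply ContinuousOn.congr hbig.continuousOn
    intro t ht
    show z t = T (max t 0) zbar + ∫ s in (0:ℝ)..t, T (max (t - s) 0) (gt s)
    rw [hz t ht, max_eq_left ht.1]
    congr 1
    apply intervalIntegral.integral_congr
    intro s hs
    rw [Set.uIcc_of_le ht.1] at hs
    simp only
    rw [max_eq_left (by linarith [hs.2] : (0:ℝ) ≤ t - s), hgg s ⟨hs.1, le_trans hs.2 ht.2⟩]
  rw [hasDerivWithinAt_iff_isLittleO, Asymptotics.isLittleO_iff]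
  intro c hc
  have hzt₀U : z t₀ ∈ U := hzU t₀ ht₀
  have hWc : ContinuousAt (fun p : Z × Z => W p.1 p.2) (z t₀, g t₀) :=
    hWcont.continuousAt ((hU.prod isOpen_univ).mem_nhds (Set.mem_prod.2 ⟨hzt₀U, Set.mem_univ _⟩))
  obtain ⟨ρ₁, hρ₁, hρW⟩ := Metric.continuousAt_iff.1 hWc (c / 2) (by positivity)
  obtain ⟨ρ₂, hρ₂, hρU⟩ := Metric.isOpen_iff.1 (hU.prod isOpen_univ) (z t₀, g t₀)
    (Set.mem_prod.2 ⟨hzt₀U, Set.mem_univ _⟩)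
  set ρ := min ρ₁ ρ₂ with hρdef
  have hρ : 0 < ρ := lt_min hρ₁ hρ₂
  obtain ⟨M, hM0, hM⟩ := aux_bound T hTcont 0 1
  have hM2 : (0:ℝ) < M + 2 := by linarith
  obtain ⟨δ₁, hδ₁, hδ₁'⟩ := Metric.continuousWithinAt_iff.1 (hzc t₀ ht₀)
    (ρ / (2 * (M + 2))) (by positivity)
  obtain ⟨δ₂, hδ₂, hδ₂'⟩ := Metric.continuousWithinAt_iff.1 (hg t₀ ht₀)
    (ρ / (2 * (M + 2))) (by positivity)
  obtain ⟨δ₃, hδ₃, hδ₃'⟩ := Metric.continuousAt_iff.1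
    (aux_Tmax_cont T hTcont (z t₀)).continuousAt (ρ / 4) (by positivity)
  obtain ⟨δ₄, hδ₄, hδ₄'⟩ := Metric.continuousAt_iff.1
    (aux_Tmax_cont T hTcont (g t₀)).continuousAt (ρ / 4) (by positivity)
  set h₁ := min 1 (min (δ₃ / 2) (δ₄ / 2)) with hh₁def
  have hh₁ : 0 < h₁ := lt_min one_pos (lt_min (by linarith) (by linarith))
  have hσz : ∀ σ ∈ Set.Icc (0:ℝ) h₁, ‖T (max σ 0) (z t₀) - z t₀‖ ≤ ρ / 4 := by
    intro σ hσ
    have hd : dist σ 0 < δ₃ := by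
      rw [Real.dist_eq, sub_zero, abs_of_nonneg hσ.1]
      calc σ ≤ h₁ := hσ.2
        _ ≤ δ₃ / 2 := le_trans (min_le_right _ _) (min_le_left _ _)
        _ < δ₃ := by linarith
    have h5 := hδ₃' hd
    rw [dist_eq_norm, show T (max (0:ℝ) 0) (z t₀) = z t₀ by rw [max_self, hT0]; rfl] at h5
    exact h5.le
  have hσg : ∀ σ ∈ Set.Icc (0:ℝ) h₁, ‖T (max σ 0) (g t₀) - g t₀‖ ≤ ρ / 4 := by
    intro σ hσ
    have hd : dist σ 0 < δ₄ := by
      rw [Real.dist_eq, sub_zero, abs_of_nonneg hσ.1]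
      calc σ ≤ h₁ := hσ.2
        _ ≤ δ₄ / 2 := le_trans (min_le_right _ _) (min_le_right _ _)
        _ < δ₄ := by linarith
    have h5 := hδ₄' hd
    rw [dist_eq_norm, show T (max (0:ℝ) 0) (g t₀) = g t₀ by rw [max_self, hT0]; rfl] at h5
    exact h5.le
  -- generic approximation estimate
  have est : ∀ y y₀ : Z, (∀ σ ∈ Set.Icc (0:ℝ) h₁, ‖T (max σ 0) y₀ - y₀‖ ≤ ρ / 4) →
      ‖y - y₀‖ ≤ ρ / (2 * (M + 2)) → ∀ h : ℝ, 0 < h → h ≤ h₁ →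
      ‖(h⁻¹ • ∫ σ in (0:ℝ)..h, T (max σ 0) y) - y₀‖ < ρ := by
    intro y y₀ hσb hyy h hh hhh
    have hC : ∀ σ ∈ Set.Icc (0:ℝ) h, ‖T (max σ 0) y - y‖ ≤ (M + 1) * ‖y - y₀‖ + ρ / 4 := by
      intro σ hσ
      have hσ1 : σ ∈ Set.Icc (0:ℝ) 1 := ⟨hσ.1, le_trans hσ.2 (le_trans hhh (min_le_left _ _))⟩
      have hsplit : T (max σ 0) y - y
          = T (max σ 0) (y - y₀) + (T (max σ 0) y₀ - y₀) + (y₀ - y) := by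
        rw [map_sub]; abel
      rw [hsplit]
      have b1 : ‖T (max σ 0) (y - y₀)‖ ≤ M * ‖y - y₀‖ :=
        le_trans ((T _).le_opNorm _) (mul_le_mul_of_nonneg_right (hM σ hσ1) (norm_nonneg _))
      have b2 := hσb σ ⟨hσ.1, le_trans hσ.2 hhh⟩
      calc ‖T (max σ 0) (y - y₀) + (T (max σ 0) y₀ - y₀) + (y₀ - y)‖
          ≤ ‖T (max σ 0) (y - y₀)‖ + ‖T (max σ 0) y₀ - y₀‖ + ‖y₀ - y‖ := norm_add₃_le
        _ ≤ M * ‖y - y₀‖ + ρ / 4 + ‖y - y₀‖ :=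
            add_le_add (add_le_add b1 b2) (norm_sub_rev y₀ y).le
        _ = (M + 1) * ‖y - y₀‖ + ρ / 4 := by ring
    have havg := aux_avg_close T hTcont y h hh _ hC
    have t1 : ‖(h⁻¹ • ∫ σ in (0:ℝ)..h, T (max σ 0) y) - y₀‖
        ≤ ‖(h⁻¹ • ∫ σ in (0:ℝ)..h, T (max σ 0) y) - y‖ + ‖y - y₀‖ := by
      have := dist_triangle (h⁻¹ • ∫ σ in (0:ℝ)..h, T (max σ 0) y) y y₀
      simpa [dist_eq_norm] using this
    have t3 : (M + 2) * ‖y - y₀‖ ≤ (M + 2) * (ρ / (2 * (M + 2))) :=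
      mul_le_mul_of_nonneg_left hyy hM2.le
    have t4 : (M + 1) * ‖y - y₀‖ + ‖y - y₀‖ = (M + 2) * ‖y - y₀‖ := by ring
    have e5 : (M + 2) * (ρ / (2 * (M + 2))) = ρ / 2 := by
      field_simp
    linarith
  -- the approximants stay in the good ball
  have hwball : ∀ h : ℝ, 0 < h → h ≤ h₁ → ∀ s ∈ Set.Icc (0:ℝ) τ, dist s t₀ < min δ₁ δ₂ →
      dist (((h⁻¹ • ∫ σ in (0:ℝ)..h, T (max σ 0) (z s)) : Z),
            ((h⁻¹ • ∫ σ in (0:ℝ)..h, T (max σ 0) (g s)) : Z))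
        (((z t₀), (g t₀)) : Z × Z) < ρ := by
    intro h hh hhh s hs hds
    rw [Prod.dist_eq, max_lt_iff]
    constructor
    · show dist (h⁻¹ • ∫ σ in (0:ℝ)..h, T (max σ 0) (z s)) (z t₀) < ρ
      rw [dist_eq_norm]
      apply est (z s) (z t₀) hσz _ h hh hhh
      have := hδ₁' hs (lt_of_lt_of_le hds (min_le_left _ _))
      rw [dist_eq_norm] at this
      exact this.le
    · show dist (h⁻¹ • ∫ σ in (0:ℝ)..h, T (max σ 0) (g s)) (g t₀) < ρ
      rw [dist_eq_norm]
      apply est (g s) (g t₀) hσg _ h hh hhh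
      have := hδ₂' hs (lt_of_lt_of_le hds (min_le_right _ _))
      rw [dist_eq_norm] at this
      exact this.le
  -- main per-h inequality via the mean value theorem
  have main : ∀ h : ℝ, 0 < h → h ≤ h₁ → ∀ t' ∈ Set.Icc (0:ℝ) τ, dist t' t₀ < min δ₁ δ₂ →
      ‖(V (h⁻¹ • ∫ σ in (0:ℝ)..h, T (max σ 0) (z t'))
          - V (h⁻¹ • ∫ σ in (0:ℝ)..h, T (max σ 0) (z t₀)))
        - (t' - t₀) • W (z t₀) (g t₀)‖ ≤ c / 2 * |t' - t₀| := by
    intro h hh hhh t' ht' hdt'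
    have hMh : ∀ σ ∈ Set.Icc (0:ℝ) h, ‖T (max σ 0)‖ ≤ M := fun σ hσ =>
      hM σ ⟨hσ.1, le_trans hσ.2 (le_trans hhh (min_le_left _ _))⟩
    set Ah := avgOp T h M hh hMh hTcont with hAhdef
    have hAha : ∀ y : Z, Ah y = h⁻¹ • ∫ σ in (0:ℝ)..h, T (max σ 0) y := fun y =>
      avgOp_apply T h M hh hMh hTcont y
    have hcomm : ∀ (ε : ℝ), 0 ≤ ε → ∀ y : Z, Ah (T ε y) = T ε (Ah y) := fun ε hε y =>
      avgOp_comm T h M hh hMh hTadd hTcont hε y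
    set a := min t' t₀ with hadef
    set b := max t' t₀ with hbdef
    have hab : a ≤ b := min_le_max
    have ha0 : 0 ≤ a := le_min ht'.1 ht₀.1
    have hbτ : b ≤ τ := max_le ht'.2 ht₀.2
    have hba : b - a = |t' - t₀| := by
      rw [abs_sub_comm]
      exact max_sub_min_eq_abs t' t₀
    have hmem : ∀ s ∈ Set.Icc a b, s ∈ Set.Icc (0:ℝ) τ ∧ dist s t₀ < min δ₁ δ₂ := by
      intro s hs
      refine ⟨⟨le_trans ha0 hs.1, le_trans hs.2 hbτ⟩, ?_⟩
      have h6 : a ≤ t₀ := min_le_right _ _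
      have h7 : t₀ ≤ b := le_max_right _ _
      have h8 : |s - t₀| ≤ b - a := abs_le.2 ⟨by linarith [hs.1], by linarith [hs.2]⟩
      rw [Real.dist_eq]
      calc |s - t₀| ≤ b - a := h8
        _ = |t' - t₀| := hba
        _ = dist t' t₀ := (Real.dist_eq _ _).symm
        _ < min δ₁ δ₂ := hdt'
    have hball : ∀ s ∈ Set.Icc a b,
        dist ((Ah (z s), Ah (g s)) : Z × Z) (((z t₀), (g t₀)) : Z × Z) < ρ := by
      intro s hs
      obtain ⟨hsI, hds⟩ := hmem s hs
      rw [hAha (z s), hAha (g s)]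
      exact hwball h hh hhh s hsI hds
    have hUmem : ∀ s ∈ Set.Icc a b, Ah (z s) ∈ U := by
      intro s hs
      exact (Set.mem_prod.1 (hρU (Metric.mem_ball.2 (lt_of_lt_of_le (hball s hs) (min_le_right _ _))))).1
    have hDBmem : ∀ s ∈ Set.Icc a b, Ah (z s) ∈ DB := by
      intro s hs
      rw [hAha (z s)]
      exact aux_memDB T hT0 hTadd hTcont DB hDB (z s) h hh
    have hWb : ∀ s ∈ Set.Icc a b, ‖W (Ah (z s)) (Ah (g s)) - W (z t₀) (g t₀)‖ ≤ c / 2 := by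
      intro s hs
      have h5 := hρW (lt_of_lt_of_le (hball s hs) (min_le_left _ _))
      rw [dist_eq_norm] at h5
      exact h5.le
    -- right derivative on [a, b)
    have hderiv : ∀ s ∈ Set.Ico a b,
        HasDerivWithinAt (fun u => V (Ah (z u)) - u • W (z t₀) (g t₀))
          (W (Ah (z s)) (Ah (g s)) - W (z t₀) (g t₀)) (Set.Ici s) s := by
      intro s hs
      have hsab : s ∈ Set.Icc a b := ⟨hs.1, hs.2.le⟩
      obtain ⟨hsI, _⟩ := hmem s hsab
      have hsτ : s < τ := lt_of_lt_of_le hs.2 hbτ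
      have hwd : HasDerivWithinAt (fun u => Ah (z u))
          (-(Bop (Ah (z s))) + Ah (g s)) (Set.Ici s) s := by
        have hG := aux_G_deriv T hT0 hTcont gt hgtc s
        have h2 : HasDerivWithinAt (fun u => Ah (∫ r in s..u, T (max (u - r) 0) (gt r)))
            (Ah (gt s)) (Set.Ici s) s :=
          Ah.hasFDerivAt.comp_hasDerivWithinAt s hG
        have h1 : HasDerivWithinAt (fun u => T (u - s) (Ah (z s)))
            (-(Bop (Ah (z s)))) (Set.Ici s) s := by
          have inner : HasDerivWithinAt (fun u : ℝ => u - s) 1 (Set.Ici s) s :=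
            ((hasDerivAt_id s).sub_const s).hasDerivWithinAt
          have maps : Set.MapsTo (fun u : ℝ => u - s) (Set.Ici s) (Set.Ici 0) :=
            fun u hu => by simpa [Set.mem_Ici] using sub_nonneg.2 (Set.mem_Ici.1 hu)
          have h3 := (hBop _ (hDBmem s hsab)).scomp_of_eq s inner maps (by simp)
          simpa [Function.comp_def] using h3
        have hsum := h1.add h2
        have heq : ∀ u ∈ Set.Icc s τ,
            Ah (z u) = T (u - s) (Ah (z s)) + Ah (∫ r in s..u, T (max (u - r) 0) (gt r)) := by
          intro u hu
          have hcaus := aux_caus T hTadd hTcont τ zbar g gt hgtc hgg z hz s u hsI.1 hu.1 hu.2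
          rw [hcaus, ContinuousLinearMap.map_add, hcomm (u - s) (sub_nonneg.2 hu.1) (z s)]
        have h9 : HasDerivWithinAt (fun u => Ah (z u))
            (-(Bop (Ah (z s))) + Ah (gt s)) (Set.Icc s τ) s :=
          ((hsum.mono Set.Icc_subset_Ici_self).congr
            (fun u hu => heq u hu) (heq s ⟨le_rfl, hsτ.le⟩))
        have h10 := h9.mono_of_mem_nhdsWithin (Icc_mem_nhdsGE_of_mem ⟨le_rfl, hsτ⟩)
        rwa [hgg s hsI] at h10
      have hVd := (hDV _ ⟨hUmem s hsab, hDBmem s hsab⟩).comp_hasDerivWithinAt s hwd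
      rw [hVW _ ⟨hUmem s hsab, hDBmem s hsab⟩ (Ah (g s))] at hVd
      have hlin : HasDerivWithinAt (fun u : ℝ => u • W (z t₀) (g t₀))
          (W (z t₀) (g t₀)) (Set.Ici s) s := by
        simpa using ((hasDerivAt_id s).smul_const (W (z t₀) (g t₀))).hasDerivWithinAt
      exact hVd.sub hlin
    have hcont : ContinuousOn (fun u => V (Ah (z u)) - u • W (z t₀) (g t₀))
        (Set.Icc a b) := by
      apply ContinuousOn.sub
      · intro u hu
        have hAhz : ContinuousWithinAt (fun u => Ah (z u)) (Set.Icc a b) u :=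
          Ah.continuous.continuousAt.comp_continuousWithinAt
            ((hzc.mono (fun x hx => (hmem x hx).1)) u hu)
        exact (hVcont _ (hUmem u hu)).comp_continuousWithinAt (f := fun u => Ah (z u)) hAhz
      · exact (continuous_id.smul continuous_const).continuousOn
    have hMVT := norm_image_sub_le_of_norm_deriv_right_le_segment hcont hderiv
      (fun s hs => hWb s ⟨hs.1, hs.2.le⟩) b (Set.right_mem_Icc.2 hab)
    have hfba : (V (Ah (z b)) - b • W (z t₀) (g t₀))
        - (V (Ah (z a)) - a • W (z t₀) (g t₀))
        = (V (Ah (z b)) - V (Ah (z a))) - (b - a) • W (z t₀) (g t₀) := by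
      rw [sub_smul]; abel
    rw [hfba] at hMVT
    rw [← hAha (z t'), ← hAha (z t₀)]
    rcases le_total t₀ t' with hcase | hcase
    · have haa : a = t₀ := min_eq_right hcase
      have hbb : b = t' := max_eq_left hcase
      rw [haa, hbb] at hMVT
      rw [abs_of_nonneg (sub_nonneg.2 hcase)]
      exact hMVT
    · have haa : a = t' := min_eq_left hcase
      have hbb : b = t₀ := max_eq_right hcase
      rw [haa, hbb] at hMVT
      have hflip : (V (Ah (z t')) - V (Ah (z t₀))) - (t' - t₀) • W (z t₀) (g t₀)
          = -((V (Ah (z t₀)) - V (Ah (z t'))) - (t₀ - t') • W (z t₀) (g t₀)) := by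
        rw [sub_smul, sub_smul]; abel
      rw [hflip, norm_neg, abs_sub_comm, abs_of_nonneg (sub_nonneg.2 hcase)]
      exact hMVT
  -- pass to the limit h → 0⁺
  rw [eventually_nhdsWithin_iff, Metric.eventually_nhds_iff]
  refine ⟨min δ₁ δ₂, lt_min hδ₁ hδ₂, fun t' hdist ht'mem => ?_⟩
  have hlim1 : Tendsto (fun h : ℝ => V (h⁻¹ • ∫ σ in (0:ℝ)..h, T (max σ 0) (z t')))
      (nhdsWithin 0 (Set.Ioi 0)) (nhds (V (z t'))) :=
    ((hVcont _ (hzU t' ht'mem)).tendsto).comp (aux_avg_tendsto T hT0 hTcont (z t'))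
  have hlim2 : Tendsto (fun h : ℝ => V (h⁻¹ • ∫ σ in (0:ℝ)..h, T (max σ 0) (z t₀)))
      (nhdsWithin 0 (Set.Ioi 0)) (nhds (V (z t₀))) :=
    ((hVcont _ hzt₀U).tendsto).comp (aux_avg_tendsto T hT0 hTcont (z t₀))
  have hlim : Tendsto (fun h : ℝ =>
      ‖(V (h⁻¹ • ∫ σ in (0:ℝ)..h, T (max σ 0) (z t'))
          - V (h⁻¹ • ∫ σ in (0:ℝ)..h, T (max σ 0) (z t₀)))
        - (t' - t₀) • W (z t₀) (g t₀)‖)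
      (nhdsWithin 0 (Set.Ioi 0))
      (nhds (‖(V (z t') - V (z t₀)) - (t' - t₀) • W (z t₀) (g t₀)‖)) :=
    ((hlim1.sub hlim2).sub tendsto_const_nhds).norm
  have hev : ∀ᶠ h in nhdsWithin (0:ℝ) (Set.Ioi 0),
      ‖(V (h⁻¹ • ∫ σ in (0:ℝ)..h, T (max σ 0) (z t'))
          - V (h⁻¹ • ∫ σ in (0:ℝ)..h, T (max σ 0) (z t₀)))
        - (t' - t₀) • W (z t₀) (g t₀)‖ ≤ c / 2 * |t' - t₀| := by
    rw [eventually_nhdsWithin_iff, Metric.eventually_nhds_iff]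
    refine ⟨h₁, hh₁, fun h hdh hhmem => ?_⟩
    have hh : (0:ℝ) < h := hhmem
    rw [Real.dist_eq, sub_zero, abs_of_pos hh] at hdh
    exact main h hh hdh.le t' ht'mem hdist
  have hfinal := le_of_tendsto hlim hev
  rw [Real.norm_eq_abs]
  have habs : (0:ℝ) ≤ |t' - t₀| := abs_nonneg _
  have hstep : c / 2 * |t' - t₀| ≤ c * |t' - t₀| := by nlinarith
  calc ‖V (z t') - V (z t₀) - (t' - t₀) • W (z t₀) (g t₀)‖
      ≤ c / 2 * |t' - t₀| := hfinal
    _ ≤ c * |t' - t₀| := hstep
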